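/- Let Γ = (γ_1,…,γ_d) ∈ 𝕋^d and let z ∈ 𝕋^d satisfy G(Γ) ⊆ G(z). Then for every open set O ⊆ 𝕋^d containing z, there exist infinitely many n ∈ ℕ with Γ^n ∈ O. -/

import Mathlib

open MeasureTheory Topology Set

namespace KroneckerAux

variable {d : ℕ}

variable {d : ℕ}

noncomputable def chi (a : Fin d → ℤ) : C(Fin d → Circle, ℂ) :=
  ⟨fun x => ((∏ j, x j ^ a j : Circle) : ℂ),
    continuous_subtype_val.comp
      (continuous_finset_prod (M := Circle) _ fun j _ => (continuous_apply j).zpow (a j))⟩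

lemma chi_apply (a : Fin d → ℤ) (x : Fin d → Circle) :
    chi a x = ((∏ j, x j ^ a j : Circle) : ℂ) := rfl


lemma chi_mul (a : Fin d → ℤ) (x y : Fin d → Circle) :
    chi a (x * y) = chi a x * chi a y := by
  simp only [chi_apply, Pi.mul_apply, mul_zpow, Finset.prod_mul_distrib, Circle.coe_mul]

lemma chi_mul_chi (a b : Fin d → ℤ) : chi a * chi b = chi (a + b) := by
  ext x
  simp only [ContinuousMap.mul_apply, chi_apply, Pi.add_apply, zpow_add, Finset.prod_mul_distrib,
    Circle.coe_mul]

lemma chi_zero : chi (0 : Fin d → ℤ) = 1 := by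
  ext x
  simp [chi_apply]

lemma star_chi (a : Fin d → ℤ) : star (chi a) = chi (-a) := by
  ext x
  simp only [ContinuousMap.star_apply, chi_apply, Pi.neg_apply, zpow_neg, RCLike.star_def,
    ← Circle.coe_inv_eq_conj, Finset.prod_inv_distrib, Circle.coe_inv]

/-- The span of the characters, as a star subalgebra of `C(𝕋^d, ℂ)`. -/
noncomputable def charAlg (d : ℕ) : StarSubalgebra ℂ C(Fin d → Circle, ℂ) where
  toSubalgebra := (Submodule.span ℂ (Set.range (chi (d := d)))).toSubalgebra
    (Submodule.subset_span ⟨0, chi_zero⟩)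
    (by
      intro x y hx hy
      have h := Submodule.mul_mem_mul hx hy
      rw [Submodule.span_mul_span] at h
      refine Submodule.span_mono ?_ h
      rintro _ ⟨_, ⟨a, rfl⟩, _, ⟨b, rfl⟩, rfl⟩
      exact ⟨a + b, (chi_mul_chi a b).symm⟩)
  star_mem' := by
    intro x hx
    induction hx using Submodule.span_induction with
    | mem f hf =>
      obtain ⟨a, rfl⟩ := hf
      rw [star_chi]
      exact Submodule.subset_span ⟨-a, rfl⟩
    | zero =>
      rw [star_zero]
      exact Submodule.zero_mem _
    | add f g _ _ hf hg => rw [star_add]; exact Submodule.add_mem _ hf hg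
    | smul c f _ hf => rw [star_smul]; exact Submodule.smul_mem _ _ hf

lemma charAlg_separatesPoints (d : ℕ) : (charAlg d).SeparatesPoints := by
  intro x y hxy
  obtain ⟨j, hj⟩ : ∃ j, x j ≠ y j := by
    by_contra hc
    push_neg at hc
    exact hxy (funext hc)
  refine ⟨_, ⟨chi (Pi.single j 1), Submodule.subset_span ⟨_, rfl⟩, rfl⟩, ?_⟩
  have key : ∀ w : Fin d → Circle, chi (Pi.single j 1) w = (w j : ℂ) := by
    intro w
    rw [chi_apply]
    congr 1
    rw [Finset.prod_eq_single j]
    · simp; rfl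
    · intro b _ hb; simp [Pi.single_eq_of_ne hb]
    · simp
  simp only [key]
  exact fun hc => hj (Subtype.ext hc)

lemma charAlg_dense (d : ℕ) (f : C(Fin d → Circle, ℂ)) (ε : ℝ) (hε : 0 < ε) :
    ∃ P ∈ Submodule.span ℂ (Set.range (chi (d := d))), dist P f < ε := by
  have h := ContinuousMap.starSubalgebra_topologicalClosure_eq_top_of_separatesPoints
    (charAlg d) (charAlg_separatesPoints d)
  have hf : f ∈ closure ((charAlg d) : Set C(Fin d → Circle, ℂ)) := by
    have : f ∈ (charAlg d).topologicalClosure := by rw [h]; trivial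
    exact this
  obtain ⟨P, hP, hPd⟩ := Metric.mem_closure_iff.mp hf ε hε
  exact ⟨P, hP, by rwa [dist_comm]⟩

lemma z_mem_closure (d : ℕ) (Γ z : Fin d → Circle)
    (h : ∀ a : Fin d → ℤ, (∏ j, Γ j ^ a j) = 1 → (∏ j, z j ^ a j) = 1) :
    z ∈ (Subgroup.zpowers Γ).topologicalClosure := by
  by_contra hzH
  set H := (Subgroup.zpowers Γ).topologicalClosure with hHdef
  have hΓH : Γ ∈ H := Subgroup.le_topologicalClosure _ (Subgroup.mem_zpowers Γ)
  have hHcl : IsClosed (H : Set (Fin d → Circle)) := Subgroup.isClosed_topologicalClosure _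
  letI : MeasurableSpace ↥H := borel _
  haveI : BorelSpace ↥H := ⟨rfl⟩
  haveI : CompactSpace ↥H := isCompact_iff_compactSpace.mp hHcl.isCompact
  haveI : Nonempty ↥H := ⟨1⟩
  let μ : Measure ↥H := Measure.haar
  haveI : IsFiniteMeasure μ := ⟨isCompact_univ.measure_lt_top⟩
  -- Urysohn function
  have hBcl : IsClosed ((fun x => z * x) '' (H : Set (Fin d → Circle))) :=
    (Homeomorph.mulLeft z).isClosedMap _ hHcl
  have hdisj : Disjoint ((fun x => z * x) '' (H : Set (Fin d → Circle)))
      (H : Set (Fin d → Circle)) := by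
    rw [Set.disjoint_left]
    rintro x ⟨w, hw, rfl⟩ hx
    exact hzH (by simpa using H.mul_mem hx (H.inv_mem hw))
  obtain ⟨f, hf0, hf1, hfb⟩ := exists_continuous_zero_one_of_isClosed hBcl hHcl hdisj
  set fC : C(Fin d → Circle, ℂ) :=
    ⟨fun x => (f x : ℂ), Complex.continuous_ofReal.comp f.continuous⟩ with hfCdef
  -- approximation
  obtain ⟨P, hPmem, hPd⟩ := charAlg_dense d fC (1/4) (by norm_num)
  -- integrability
  have integ : ∀ (F : C(Fin d → Circle, ℂ)) (φ : ↥H → (Fin d → Circle)), Continuous φ →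
      Integrable (fun x : ↥H => F (φ x)) μ := by
    intro F φ hφ
    exact (F.continuous.comp hφ).integrable_of_hasCompactSupport
      (IsCompact.of_isClosed_subset isCompact_univ (isClosed_tsupport _) (subset_univ _))
  have contz : Continuous fun x : ↥H => z * (x : Fin d → Circle) :=
    continuous_const.mul continuous_subtype_val
  -- key character identity
  have key : ∀ a : Fin d → ℤ,
      (∫ x : ↥H, chi a (z * ↑x) ∂μ) = ∫ x : ↥H, chi a (↑x : Fin d → Circle) ∂μ := by
    intro a
    by_cases htriv : ∀ x : ↥H, chi a (↑x : Fin d → Circle) = 1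
    · have hz1 : chi a z = 1 := by
        have hΓ1 : (∏ j, Γ j ^ a j : Circle) = 1 := by
          have h2 : ((∏ j, Γ j ^ a j : Circle) : ℂ) = 1 := by
            simpa [chi_apply] using htriv ⟨Γ, hΓH⟩
          exact Circle.coe_eq_one.mp h2
        rw [chi_apply, h a hΓ1, Circle.coe_one]
      simp only [chi_mul, hz1, one_mul]
    · push_neg at htriv
      obtain ⟨x₀, hx₀⟩ := htriv
      have inv := integral_mul_left_eq_self (μ := μ)
        (fun x : ↥H => chi a (↑x : Fin d → Circle)) x₀
      simp only [smul_eq_mul, Subgroup.coe_mul, chi_mul, integral_const_mul] at inv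
      have hc : (∫ x : ↥H, chi a (↑x : Fin d → Circle) ∂μ) = 0 := by
        have hfac : ((chi a (↑x₀ : Fin d → Circle)) - 1) *
            (∫ x : ↥H, chi a (↑x : Fin d → Circle) ∂μ) = 0 := by
          rw [sub_mul, one_mul, inv, sub_self]
        rcases mul_eq_zero.mp hfac with h1 | h2
        · exact absurd (sub_eq_zero.mp h1) hx₀
        · exact h2
      simp only [chi_mul, integral_const_mul, hc, mul_zero]
  -- extend to P by linearity
  have keyP : (∫ x : ↥H, P (z * ↑x) ∂μ) = ∫ x : ↥H, P (↑x : Fin d → Circle) ∂μ := by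
    obtain ⟨n, c, g, hg⟩ := Submodule.mem_span_set'.mp hPmem
    choose aa haa using fun i => (g i).2
    have hP : ∀ y, P y = ∑ i, c i • chi (aa i) y := by
      intro y
      rw [← hg]
      simp [haa]
    simp only [hP]
    rw [integral_finset_sum (μ := μ)
        (f := fun i (x : ↥H) => c i • chi (aa i) (z * (x : Fin d → Circle))) _
        (fun i _ => ((integ (chi (aa i)) _ contz).smul (c i))),
      integral_finset_sum (μ := μ)
        (f := fun i (x : ↥H) => c i • chi (aa i) ((x : Fin d → Circle))) _
        (fun i _ => ((integ (chi (aa i)) _ continuous_subtype_val).smul (c i)))]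
    simp only [integral_smul]
    exact Finset.sum_congr rfl fun i _ => by rw [key (aa i)]
  -- evaluate the two integrals of fC
  set m : ℝ := (μ univ).toReal with hmdef
  have hm : 0 < m := ENNReal.toReal_pos
    ((isOpen_univ.measure_pos μ univ_nonempty).ne') (measure_ne_top μ univ)
  have hint1 : (∫ x : ↥H, fC (↑x : Fin d → Circle) ∂μ) = (m : ℂ) := by
    have : ∀ x : ↥H, fC (↑x : Fin d → Circle) = 1 := by
      intro x
      have := hf1 x.2
      simp only [hfCdef, ContinuousMap.coe_mk]
      rw [show f (↑x : Fin d → Circle) = 1 from this]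
      norm_num
    simp only [this]
    simp [integral_const]; rfl
  have hint0 : (∫ x : ↥H, fC (z * ↑x) ∂μ) = 0 := by
    have : ∀ x : ↥H, fC (z * ↑x) = 0 := by
      intro x
      have : f (z * ↑x) = 0 := hf0 ⟨↑x, x.2, rfl⟩
      simp [hfCdef, this]
    simp [this]
  -- bounds
  have pb : ∀ y : Fin d → Circle, ‖fC y - P y‖ ≤ 1/4 := by
    intro y
    calc ‖fC y - P y‖ = dist (P y) (fC y) := by rw [dist_comm, dist_eq_norm]
      _ ≤ dist P fC := ContinuousMap.dist_apply_le_dist y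
      _ ≤ 1/4 := hPd.le
  have b1 : ‖(∫ x : ↥H, fC (↑x : Fin d → Circle) ∂μ) -
      ∫ x : ↥H, P (↑x : Fin d → Circle) ∂μ‖ ≤ (1/4) * m := by
    rw [← integral_sub (integ fC _ continuous_subtype_val) (integ P _ continuous_subtype_val)]
    exact norm_integral_le_of_norm_le_const (Filter.Eventually.of_forall fun x => pb _)
  have b2 : ‖(∫ x : ↥H, P (z * ↑x) ∂μ) - ∫ x : ↥H, fC (z * ↑x) ∂μ‖ ≤ (1/4) * m := by
    rw [← integral_sub (integ P _ contz) (integ fC _ contz)]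
    refine norm_integral_le_of_norm_le_const (Filter.Eventually.of_forall fun x => ?_)
    rw [norm_sub_rev]
    exact pb _
  have : (m : ℝ) ≤ (1/4) * m + (1/4) * m := by
    have hsplit : (∫ x : ↥H, fC (↑x : Fin d → Circle) ∂μ) - (∫ x : ↥H, fC (z * ↑x) ∂μ)
        = ((∫ x : ↥H, fC (↑x : Fin d → Circle) ∂μ) - ∫ x : ↥H, P (↑x : Fin d → Circle) ∂μ)
          + ((∫ x : ↥H, P (z * ↑x) ∂μ) - ∫ x : ↥H, fC (z * ↑x) ∂μ) := by
      rw [keyP]; ring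
    calc m = ‖(∫ x : ↥H, fC (↑x : Fin d → Circle) ∂μ) - (∫ x : ↥H, fC (z * ↑x) ∂μ)‖ := by
            rw [hint1, hint0, sub_zero, Complex.norm_real, Real.norm_eq_abs, abs_of_nonneg hm.le]
      _ ≤ _ := by rw [hsplit]; exact (norm_add_le _ _).trans (add_le_add b1 b2)
  linarith

/-- `1` lies in the closure of `{Γ^n : n ≥ k}`. -/
lemma one_mem_closure_pow (Γ : Fin d → Circle) (k : ℕ) :
    (1 : Fin d → Circle) ∈ closure {x | ∃ n : ℕ, k + 1 ≤ n ∧ Γ ^ n = x} := by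
  set t : Set (Fin d → Circle) := {x | ∃ n : ℕ, k + 1 ≤ n ∧ Γ ^ n = x} with ht
  have hmul : ∀ x ∈ t, ∀ y ∈ t, x * y ∈ t := by
    rintro x ⟨n, hn, rfl⟩ y ⟨m, hm, rfl⟩
    exact ⟨n + m, le_trans hn (Nat.le_add_right _ _), pow_add Γ n m⟩
  have hcmul : ∀ x ∈ closure t, ∀ y ∈ closure t, x * y ∈ closure t := by
    intro x hx y hy
    have : (x, y) ∈ closure (t ×ˢ t) := by
      rw [closure_prod_eq]; exact ⟨hx, hy⟩
    exact map_mem_closure (f := fun p : (Fin d → Circle) × (Fin d → Circle) => p.1 * p.2)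
      continuous_mul this (fun p hp => hmul _ hp.1 _ hp.2)
  obtain ⟨m, hm, hidem⟩ := exists_idempotent_in_compact_subsemigroup
    (fun r => continuous_mul_right r) (closure t)
    ⟨Γ ^ (k + 1), subset_closure ⟨k + 1, le_refl _, rfl⟩⟩
    isClosed_closure.isCompact hcmul
  have : m = 1 := by
    have := mul_left_cancel (a := m) (b := m) (c := 1) (by rw [mul_one]; exact hidem)
    exact this
  rwa [this] at hm

theorem main (d : ℕ) (Γ z : Fin d → Circle)
    (h : ∀ a : Fin d → ℤ, (∏ j, Γ j ^ a j) = 1 → (∏ j, z j ^ a j) = 1)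
    (O : Set (Fin d → Circle)) (hO : IsOpen O) (hz : z ∈ O) :
    {n : ℕ | Γ ^ n ∈ O}.Infinite := by
  rw [← Nat.frequently_atTop_iff_infinite]
  rw [Filter.frequently_atTop]
  intro N
  have hzH := z_mem_closure d Γ z h
  have hzcl : z ∈ closure ((Subgroup.zpowers Γ : Subgroup (Fin d → Circle)) :
      Set (Fin d → Circle)) := by
    rw [← Subgroup.topologicalClosure_coe]
    exact hzH
  obtain ⟨g, hgO, hgmem⟩ := mem_closure_iff.mp hzcl O hO hz
  obtain ⟨m, rfl⟩ := Subgroup.mem_zpowers_iff.mp hgmem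
  set k : ℕ := N + m.natAbs with hk
  have h1 := one_mem_closure_pow Γ k
  have hU : IsOpen ((fun x => Γ ^ m * x) ⁻¹' O) := hO.preimage (continuous_const.mul continuous_id)
  have h1U : (1 : Fin d → Circle) ∈ (fun x => Γ ^ m * x) ⁻¹' O := by
    simpa using hgO
  obtain ⟨x, hxU, n, hn, rfl⟩ := mem_closure_iff.mp h1 _ hU h1U
  refine ⟨(m + n : ℤ).toNat, ?_, ?_⟩
  · have hge : (N : ℤ) ≤ m + n := by
      have h1 : (k : ℤ) + 1 ≤ (n : ℤ) := by exact_mod_cast hn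
      have h2 : -(m.natAbs : ℤ) ≤ m := neg_abs_le m |>.trans_eq' (by rw [Int.abs_eq_natAbs])
      omega
    omega
  · have hnn : (0 : ℤ) ≤ m + n := by
      have h1 : (k : ℤ) + 1 ≤ (n : ℤ) := by exact_mod_cast hn
      have h2 : -(m.natAbs : ℤ) ≤ m := neg_abs_le m |>.trans_eq' (by rw [Int.abs_eq_natAbs])
      omega
    have : Γ ^ ((m + n : ℤ).toNat) = Γ ^ (m + (n : ℤ)) := by
      rw [← zpow_natCast, Int.toNat_of_nonneg hnn]
    rw [this, zpow_add, zpow_natCast]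
    exact hxU

end KroneckerAux

/-- If `z ∈ 𝕋^d` satisfies every multiplicative relation of `Γ ∈ 𝕋^d`, then every open set
containing `z` is visited by the orbit `(Γ^n)` infinitely often. -/
theorem orbit_visits_nbhd_infinitely_often (d : ℕ) (Γ z : Fin d → Circle)
    (h : ∀ a : Fin d → ℤ, (∏ j, Γ j ^ a j) = 1 → (∏ j, z j ^ a j) = 1)
    (O : Set (Fin d → Circle)) (hO : IsOpen O) (hz : z ∈ O) :
    {n : ℕ | Γ ^ n ∈ O}.Infinite := by
  exact KroneckerAux.main d Γ z h O hO hz
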